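/- With a, b as above, define x₃ = ((p_{u₁}−p_{u₂})/(u₁−u₂))² − (u₁+u₂) and y₃ = p_{u₁} + ((p_{u₁}−p_{u₂})/(u₁−u₂))(x₃ − u₁). Then {a, x₃} = 0 and {a, y₃} = 0 on the open set where u₁ ≠ u₂. -/

import Mathlib

/-- Canonical Poisson bracket on phase space ℝ⁴ with coordinates
(u₁, u₂, p₁, p₂):  {F,G} = Σᵢ (∂F/∂uᵢ ∂G/∂pᵢ − ∂F/∂pᵢ ∂G/∂uᵢ). -/
noncomputable def pb (F G : ℝ × ℝ × ℝ × ℝ → ℝ) (z : ℝ × ℝ × ℝ × ℝ) : ℝ :=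
  fderiv ℝ F z (1, 0, 0, 0) * fderiv ℝ G z (0, 0, 1, 0)
  - fderiv ℝ F z (0, 0, 1, 0) * fderiv ℝ G z (1, 0, 0, 0)
  + fderiv ℝ F z (0, 1, 0, 0) * fderiv ℝ G z (0, 0, 0, 1)
  - fderiv ℝ F z (0, 0, 0, 1) * fderiv ℝ G z (0, 1, 0, 0)

noncomputable def aFun (z : ℝ × ℝ × ℝ × ℝ) : ℝ :=
  z.2.2.1 ^ 2 / (z.1 - z.2.1) + z.2.2.2 ^ 2 / (z.2.1 - z.1)
    - z.1 ^ 2 - z.1 * z.2.1 - z.2.1 ^ 2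

noncomputable def x₃Fun (z : ℝ × ℝ × ℝ × ℝ) : ℝ :=
  ((z.2.2.1 - z.2.2.2) / (z.1 - z.2.1)) ^ 2 - (z.1 + z.2.1)

noncomputable def y₃Fun (z : ℝ × ℝ × ℝ × ℝ) : ℝ :=
  z.2.2.1 + ((z.2.2.1 - z.2.2.2) / (z.1 - z.2.1)) * (x₃Fun z - z.1)

set_option maxHeartbeats 1000000 in
/-- {a, x₃} = 0 and {a, y₃} = 0 on {u₁ ≠ u₂}. -/
theorem stmt_2 :
    ∀ z : ℝ × ℝ × ℝ × ℝ, z.1 ≠ z.2.1 →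
      pb aFun x₃Fun z = 0 ∧ pb aFun y₃Fun z = 0 := by
  intro z hz
  have hd : z.1 - z.2.1 ≠ 0 := sub_ne_zero.2 hz
  have hd' : z.2.1 - z.1 ≠ 0 := sub_ne_zero.2 (Ne.symm hz)
  have h1 : HasFDerivAt (fun w : ℝ × ℝ × ℝ × ℝ => w.1)
      (ContinuousLinearMap.fst ℝ ℝ (ℝ × ℝ × ℝ)) z := hasFDerivAt_fst
  have h2 : HasFDerivAt (fun w : ℝ × ℝ × ℝ × ℝ => w.2.1)
      ((ContinuousLinearMap.fst ℝ ℝ (ℝ × ℝ)).comp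
        (ContinuousLinearMap.snd ℝ ℝ (ℝ × ℝ × ℝ))) z :=
    hasFDerivAt_fst.comp z hasFDerivAt_snd
  have h3 : HasFDerivAt (fun w : ℝ × ℝ × ℝ × ℝ => w.2.2.1)
      ((ContinuousLinearMap.fst ℝ ℝ ℝ).comp
        ((ContinuousLinearMap.snd ℝ ℝ (ℝ × ℝ)).comp
          (ContinuousLinearMap.snd ℝ ℝ (ℝ × ℝ × ℝ)))) z :=
    hasFDerivAt_fst.comp z (hasFDerivAt_snd.comp z hasFDerivAt_snd)
  have h4 : HasFDerivAt (fun w : ℝ × ℝ × ℝ × ℝ => w.2.2.2)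
      ((ContinuousLinearMap.snd ℝ ℝ ℝ).comp
        ((ContinuousLinearMap.snd ℝ ℝ (ℝ × ℝ)).comp
          (ContinuousLinearMap.snd ℝ ℝ (ℝ × ℝ × ℝ)))) z :=
    hasFDerivAt_snd.comp z (hasFDerivAt_snd.comp z hasFDerivAt_snd)
  -- inverses
  have hI := (hasFDerivAt_inv hd).comp z (h1.sub h2)
  have hI' := (hasFDerivAt_inv hd').comp z (h2.sub h1)
  -- squares
  have h1s := h1.mul h1; simp only [← pow_two] at h1s
  have h2s := h2.mul h2; simp only [← pow_two] at h2s
  have h3s := h3.mul h3; simp only [← pow_two] at h3s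
  have h4s := h4.mul h4; simp only [← pow_two] at h4s
  -- aFun
  have haRaw := ((((h3s.mul hI).add (h4s.mul hI')).sub h1s).sub (h1.mul h2)).sub h2s
  simp only [Function.comp_def, ← div_eq_mul_inv] at haRaw
  have ha : HasFDerivAt aFun _ z := haRaw
  -- q = (p1 - p2)/(u1 - u2)
  have hqRaw := (h3.sub h4).mul hI
  simp only [Function.comp_def, ← div_eq_mul_inv] at hqRaw
  have hq2 := hqRaw.mul hqRaw; simp only [← pow_two] at hq2
  have hx : HasFDerivAt x₃Fun _ z := hq2.sub (h1.add h2)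
  have hy : HasFDerivAt y₃Fun _ z := h3.add (hqRaw.mul ((hq2.sub (h1.add h2)).sub h1))
  rw [pb, pb, ha.fderiv, hx.fderiv, hy.fderiv]
  simp only [ContinuousLinearMap.add_apply, ContinuousLinearMap.sub_apply,
    ContinuousLinearMap.smul_apply, ContinuousLinearMap.comp_apply,
    ContinuousLinearMap.coe_fst', ContinuousLinearMap.coe_snd',
    ContinuousLinearMap.smulRight_apply, ContinuousLinearMap.one_apply,
    ContinuousLinearMap.neg_apply, smul_eq_mul, Function.comp, x₃Fun]
  norm_num
  constructor <;> (field_simp; ring)
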